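/- Let L : ℕ → ℝ with L(t) ≥ 0 for all t, let V > 0, B ∈ ℝ, g* ∈ ℝ, and let (g_t)_{t ∈ ℕ} be a real sequence such that L(t+1) − L(t) − V·g_t ≤ B − V·g* for all t ∈ ℕ. Then liminf_{T → ∞} (1/T) Σ_{t=0}^{T−1} g_t ≥ g* − B/V. -/

import Mathlib

/-- Deterministic drift-plus-penalty argument: if
`L(t+1) - L(t) - V g_t ≤ B - V g*` for all `t`, with `L ≥ 0` and `V > 0`,
then the long-term average utility is within `B/V` of `g*`. -/
theorem stmt14 (L : ℕ → ℝ) (hL : ∀ t, 0 ≤ L t) (V B gstar : ℝ) (hV : 0 < V)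
    (g : ℕ → ℝ)
    (hdrift : ∀ t, L (t + 1) - L t - V * g t ≤ B - V * gstar) :
    ((gstar - B / V : ℝ) : EReal) ≤
      Filter.liminf
        (fun T : ℕ =>
          (((1 / (T : ℝ)) * ∑ t ∈ Finset.range T, g t : ℝ) : EReal))
        Filter.atTop := by
  set c : ℝ := gstar - B / V with hc
  -- key pointwise bound
  have key : ∀ T : ℕ, 1 ≤ T →
      c - (L 0 / V) / (T : ℝ) ≤ (1 / (T : ℝ)) * ∑ t ∈ Finset.range T, g t := by
    intro T hT
    have hTpos : (0 : ℝ) < T := by exact_mod_cast hT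
    set S : ℝ := ∑ t ∈ Finset.range T, g t with hS
    have hsum : L T - L 0 - V * S ≤ (T : ℝ) * (B - V * gstar) := by
      have h1 : ∑ t ∈ Finset.range T, (L (t + 1) - L t - V * g t)
          ≤ ∑ t ∈ Finset.range T, (B - V * gstar) :=
        Finset.sum_le_sum fun t _ => hdrift t
      have h2 : ∑ t ∈ Finset.range T, (L (t + 1) - L t - V * g t)
          = L T - L 0 - V * S := by
        rw [hS, Finset.mul_sum]
        rw [← Finset.sum_range_sub L T]
        rw [← Finset.sum_sub_distrib]
      rw [h2, Finset.sum_const, Finset.card_range, nsmul_eq_mul] at h1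
      exact h1
    have hVS : (T : ℝ) * (V * gstar - B) - L 0 ≤ V * S := by
      have := hL T
      nlinarith
    rw [← sub_nonneg]
    have heq : (1 / (T : ℝ)) * S - (c - (L 0 / V) / (T : ℝ))
        = (V * S - ((T : ℝ) * (V * gstar - B) - L 0)) / (V * T) := by
      rw [hc]
      field_simp
    rw [heq]
    exact div_nonneg (by linarith) (mul_pos hV hTpos).le
  -- lower comparison sequence tends to c
  have htend : Filter.Tendsto (fun T : ℕ => ((c - (L 0 / V) / (T : ℝ) : ℝ) : EReal))
      Filter.atTop (nhds (c : EReal)) := by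
    have hre : Filter.Tendsto (fun T : ℕ => c - (L 0 / V) / (T : ℝ))
        Filter.atTop (nhds c) := by
      have h0 : Filter.Tendsto (fun T : ℕ => (L 0 / V) / (T : ℝ))
          Filter.atTop (nhds 0) := tendsto_const_div_atTop_nhds_zero_nat _
      simpa using (tendsto_const_nhds.sub h0)
    exact (continuous_coe_real_ereal.continuousAt.tendsto.comp hre)
  have hliminf_b : Filter.liminf (fun T : ℕ => ((c - (L 0 / V) / (T : ℝ) : ℝ) : EReal))
      Filter.atTop = (c : EReal) := htend.liminf_eq
  rw [← hliminf_b]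
  refine Filter.liminf_le_liminf ?_
  filter_upwards [Filter.eventually_ge_atTop 1] with T hT
  exact_mod_cast EReal.coe_le_coe_iff.mpr (key T hT)
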